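/- Let $g: \mathbb{R} \times \mathbb{R}^{N_1} \times (\mathbb{R}^d)^{N_1} \to \mathbb{R}$ be given by $g(c, w^2, w^1) = c\,\sigma\left(N_1^{-\gamma_1} \sum_{j=1}^{N_1} w^{2,j} \sigma(\langle w^{1,j}, x\rangle)\right)$ with $\sigma \in C^2$ bounded with bounded first and second derivatives, and suppose all parameters range over a compact set. Then, for parameter updates $\Delta c, \Delta w^{2,j}, \Delta w^{1,j}$ with $|\Delta c| \le \epsilon_1$, $|\Delta w^{2,j}| \le \epsilon_2$, $\|\Delta w^{1,j}\| \le \epsilon_2$ for all $j$, the second-order Taylor remainder of $g$ satisfies $\left|g(\theta + \Delta\theta) - g(\theta) - \nabla g(\theta)\cdot \Delta\theta\right| \le C\left(\epsilon_1 N_1^{1-\gamma_1}\epsilon_2 + N_1^{2(1-\gamma_1)}\epsilon_2^2\right)$ for a constant $C$ depending only on the bounds for $\sigma$, its derivatives, $x$, and the compact parameter set. -/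

import Mathlib

lemma lip_of_deriv_bd {f : ℝ → ℝ} {S : ℝ} (hf : Differentiable ℝ f)
    (hb : ∀ z, |deriv f z| ≤ S) (a b : ℝ) : |f b - f a| ≤ S * |b - a| := by
  have := Convex.norm_image_sub_le_of_norm_deriv_le (s := Set.univ)
    (fun z _ => hf.differentiableAt) (fun z _ => hb z) convex_univ
    (Set.mem_univ a) (Set.mem_univ b)
  simpa using this

lemma taylor1_bd {f : ℝ → ℝ} {S : ℝ} (hf : Differentiable ℝ f)
    (hf' : Differentiable ℝ (deriv f))
    (hb : ∀ z, |deriv (deriv f) z| ≤ S) (a h : ℝ) :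
    |f (a + h) - f a - deriv f a * h| ≤ S * h ^ 2 := by
  set g : ℝ → ℝ := fun z => f z - deriv f a * z with hg
  have hgd : ∀ z, DifferentiableAt ℝ g z := fun z =>
    (hf.differentiableAt).sub ((differentiable_id.const_mul _) z)
  have hgderiv : ∀ z, deriv g z = deriv f z - deriv f a := by
    intro z
    rw [hg]
    rw [deriv_fun_sub hf.differentiableAt (by fun_prop)]
    have : deriv (fun z : ℝ => deriv f a * z) z = deriv f a := by
      simpa using (((hasDerivAt_id z).const_mul (deriv f a)).deriv)
    simp only [this]
  have hs : Convex ℝ (Set.Icc (a - |h|) (a + |h|)) := convex_Icc _ _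
  have hmem1 : a ∈ Set.Icc (a - |h|) (a + |h|) := by
    constructor <;> nlinarith [abs_nonneg h]
  have hmem2 : a + h ∈ Set.Icc (a - |h|) (a + |h|) := by
    constructor <;> nlinarith [le_abs_self h, neg_abs_le h]
  have bound : ∀ z ∈ Set.Icc (a - |h|) (a + |h|), ‖deriv g z‖ ≤ S * |h| := by
    intro z hz
    rw [hgderiv, Real.norm_eq_abs]
    have := lip_of_deriv_bd hf' hb a z
    have hza : |z - a| ≤ |h| := by
      rw [abs_le]; constructor <;> [linarith [hz.1]; linarith [hz.2]]
    calc |deriv f z - deriv f a| ≤ S * |z - a| := this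
      _ ≤ S * |h| := by
          have hS : 0 ≤ S := le_trans (abs_nonneg _) (hb 0)
          nlinarith
  have := Convex.norm_image_sub_le_of_norm_deriv_le
    (fun z _ => hgd z) bound hs hmem1 hmem2
  have e : g (a + h) - g a = f (a + h) - f a - deriv f a * h := by
    simp only [hg]; ring
  rw [e] at this
  simpa [abs_mul, sq, mul_assoc] using this

/-- Sum bound: if each term is bounded by M, the abs of the sum is ≤ card * M. -/
lemma abs_sum_le_card_mul {n : ℕ} (f : Fin n → ℝ) (M : ℝ)
    (h : ∀ j, |f j| ≤ M) : |∑ j, f j| ≤ n * M := by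
  calc |∑ j, f j| ≤ ∑ j, |f j| := Finset.abs_sum_le_sum_abs _ _
    _ ≤ ∑ _j : Fin n, M := Finset.sum_le_sum (fun j _ => h j)
    _ = n * M := by simp [Finset.sum_const, Finset.card_univ, nsmul_eq_mul]

set_option maxHeartbeats 1000000 in
/-- Second-order Taylor remainder bound for the single-neuron output map of the
two-layer network (the remainder `R^{N₁,N₂}` in Appendix B.1). -/
theorem taylor_remainder_bound
    (d : ℕ) (σ : ℝ → ℝ) (S K R : ℝ)
    (hσC2 : ContDiff ℝ 2 σ)
    (hσbd : ∀ z, |σ z| ≤ S) (hσ'bd : ∀ z, |deriv σ z| ≤ S)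
    (hσ''bd : ∀ z, |deriv (deriv σ) z| ≤ S)
    (x : Fin d → ℝ) (hx : ‖x‖ ≤ R)
    (hS : 0 ≤ S) (hK : 0 ≤ K) (hR : 0 ≤ R) :
    ∃ C : ℝ, ∀ N1 : ℕ, 1 ≤ N1 → ∀ γ1 : ℝ, 1/2 ≤ γ1 → γ1 ≤ 1 →
      ∀ (θ Δθ : ℝ × (Fin N1 → ℝ) × (Fin N1 → Fin d → ℝ)) (ε1 ε2 : ℝ),
        0 ≤ ε1 → 0 ≤ ε2 →
        |θ.1| ≤ K → (∀ j, |θ.2.1 j| ≤ K) → (∀ j, ‖θ.2.2 j‖ ≤ K) →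
        |(θ + Δθ).1| ≤ K → (∀ j, |(θ + Δθ).2.1 j| ≤ K) → (∀ j, ‖(θ + Δθ).2.2 j‖ ≤ K) →
        |Δθ.1| ≤ ε1 → (∀ j, |Δθ.2.1 j| ≤ ε2) → (∀ j, ‖Δθ.2.2 j‖ ≤ ε2) →
        (let g : ℝ × (Fin N1 → ℝ) × (Fin N1 → Fin d → ℝ) → ℝ := fun p =>
            p.1 * σ ((N1 : ℝ) ^ (-γ1) * ∑ j, p.2.1 j * σ (∑ l, p.2.2 j l * x l));
          |g (θ + Δθ) - g θ - fderiv ℝ g θ Δθ|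
            ≤ C * (ε1 * (N1 : ℝ) ^ (1 - γ1) * ε2 + (N1 : ℝ) ^ (2 * (1 - γ1)) * ε2 ^ 2)) := by
  classical
  -- derived facts about σ
  have hσd : Differentiable ℝ σ := hσC2.differentiable (by norm_num)
  have hσ'd : Differentiable ℝ (deriv σ) := by
    have h2 : ContDiff ℝ ((1 : WithTop ℕ∞) + 1) σ := by norm_num; exact hσC2
    exact ((contDiff_succ_iff_deriv.mp h2).2.2).differentiable one_ne_zero
  have hσlip : ∀ a b : ℝ, |σ b - σ a| ≤ S * |b - a| := lip_of_deriv_bd hσd hσ'bd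
  have hσtaylor : ∀ a h : ℝ, |σ (a + h) - σ a - deriv σ a * h| ≤ S * h ^ 2 :=
    taylor1_bd hσd hσ'd hσ''bd
  set B : ℝ := d * R with hB
  have hBnn : 0 ≤ B := mul_nonneg (Nat.cast_nonneg d) hR
  set C1 : ℝ := S + K * S * B with hC1
  set C2 : ℝ := S * B + K * S * B ^ 2 with hC2
  have hC1nn : 0 ≤ C1 := add_nonneg hS (mul_nonneg (mul_nonneg hK hS) hBnn)
  have hC2nn : 0 ≤ C2 := add_nonneg (mul_nonneg hS hBnn) (mul_nonneg (mul_nonneg hK hS) (sq_nonneg B))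
  refine ⟨S * C1 + K * S * C1 ^ 2 + K * S * C2, ?_⟩
  intro N1 hN1 γ1 hγa hγb θ Δθ ε1 ε2 hε1 hε2 hc hw2 hw1 hc' hw2' hw1' hΔc hΔw2 hΔw1
  dsimp only
  -- basic numeric facts
  have hNpos : (0:ℝ) < N1 := by exact_mod_cast Nat.lt_of_lt_of_le Nat.zero_lt_one hN1
  have hN1le : (1:ℝ) ≤ N1 := by exact_mod_cast hN1
  set P : ℝ := (N1:ℝ) ^ (1 - γ1) with hPdef
  set Q : ℝ := (N1:ℝ) ^ (2 * (1 - γ1)) with hQdef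
  have hPpos : 0 < P := Real.rpow_pos_of_pos hNpos _
  have hQpos : 0 < Q := Real.rpow_pos_of_pos hNpos _
  have hNgnn : 0 ≤ (N1:ℝ) ^ (-γ1) := le_of_lt (Real.rpow_pos_of_pos hNpos _)
  have hP : (N1:ℝ) ^ (-γ1) * (N1:ℝ) = P := by
    rw [hPdef, show (1:ℝ) - γ1 = -γ1 + 1 by ring, Real.rpow_add hNpos, Real.rpow_one]
  have hPsq : P ^ 2 = Q := by
    rw [hPdef, hQdef, sq, ← Real.rpow_add hNpos]; ring_nf
  have hPle : P ≤ Q := Real.rpow_le_rpow_of_exponent_le hN1le (by linarith)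
  -- notations for the parameters
  set a : Fin N1 → ℝ := fun j => ∑ l, θ.2.2 j l * x l with ha
  set b : Fin N1 → ℝ := fun j => ∑ l, x l * Δθ.2.2 j l with hb
  -- bound on b j
  have hbj : ∀ j, |b j| ≤ B * ε2 := by
    intro j
    have : ∀ l, |x l * Δθ.2.2 j l| ≤ R * ε2 := by
      intro l
      rw [abs_mul]
      have h1 : |x l| ≤ R := le_trans (norm_le_pi_norm x l) hx
      have h2 : |Δθ.2.2 j l| ≤ ε2 := le_trans (norm_le_pi_norm (Δθ.2.2 j) l) (hΔw1 j)
      exact mul_le_mul h1 h2 (abs_nonneg _) hR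
    calc |b j| ≤ d * (R * ε2) := abs_sum_le_card_mul _ _ this
      _ = B * ε2 := by rw [hB]; ring
  -- the main CLM derivative structure
  set P3 : (ℝ × (Fin N1 → ℝ) × (Fin N1 → Fin d → ℝ)) →L[ℝ] (Fin N1 → Fin d → ℝ) :=
    (ContinuousLinearMap.snd ℝ (Fin N1 → ℝ) (Fin N1 → Fin d → ℝ)).comp
      (ContinuousLinearMap.snd ℝ ℝ ((Fin N1 → ℝ) × (Fin N1 → Fin d → ℝ))) with hP3
  set P2 : (ℝ × (Fin N1 → ℝ) × (Fin N1 → Fin d → ℝ)) →L[ℝ] (Fin N1 → ℝ) :=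
    (ContinuousLinearMap.fst ℝ (Fin N1 → ℝ) (Fin N1 → Fin d → ℝ)).comp
      (ContinuousLinearMap.snd ℝ ℝ ((Fin N1 → ℝ) × (Fin N1 → Fin d → ℝ))) with hP2
  set A : Fin N1 → ((ℝ × (Fin N1 → ℝ) × (Fin N1 → Fin d → ℝ)) →L[ℝ] ℝ) := fun j =>
    ∑ l, x l • ((ContinuousLinearMap.proj l).comp ((ContinuousLinearMap.proj j).comp P3)) with hAdef
  set W2 : Fin N1 → ((ℝ × (Fin N1 → ℝ) × (Fin N1 → Fin d → ℝ)) →L[ℝ] ℝ) := fun j => (ContinuousLinearMap.proj j).comp P2 with hW2def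
  have hA : ∀ j, HasFDerivAt (fun p : ℝ × (Fin N1 → ℝ) × (Fin N1 → Fin d → ℝ) => ∑ l, p.2.2 j l * x l) (A j) θ := by
    intro j
    apply HasFDerivAt.fun_sum
    intro l _
    exact (((ContinuousLinearMap.proj l).comp
      ((ContinuousLinearMap.proj j).comp P3)).hasFDerivAt).mul_const (x l)
  have hW2 : ∀ j, HasFDerivAt (fun p : ℝ × (Fin N1 → ℝ) × (Fin N1 → Fin d → ℝ) => p.2.1 j) (W2 j) θ := fun j => (W2 j).hasFDerivAt
  have hcomp : ∀ j, HasFDerivAt (fun p : ℝ × (Fin N1 → ℝ) × (Fin N1 → Fin d → ℝ) => σ (∑ l, p.2.2 j l * x l))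
      (deriv σ (a j) • A j) θ := fun j =>
    HasDerivAt.comp_hasFDerivAt θ ((hσd _).hasDerivAt) (hA j)
  have hterm : ∀ j, HasFDerivAt (fun p : ℝ × (Fin N1 → ℝ) × (Fin N1 → Fin d → ℝ) => p.2.1 j * σ (∑ l, p.2.2 j l * x l))
      (θ.2.1 j • (deriv σ (a j) • A j) + σ (a j) • W2 j) θ := fun j =>
    (hW2 j).mul (hcomp j)
  have hsum : HasFDerivAt (fun p : ℝ × (Fin N1 → ℝ) × (Fin N1 → Fin d → ℝ) => ∑ j, p.2.1 j * σ (∑ l, p.2.2 j l * x l))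
      (∑ j, (θ.2.1 j • (deriv σ (a j) • A j) + σ (a j) • W2 j)) θ :=
    HasFDerivAt.fun_sum (fun j _ => hterm j)
  set U : (ℝ × (Fin N1 → ℝ) × (Fin N1 → Fin d → ℝ)) →L[ℝ] ℝ :=
    (N1:ℝ)^(-γ1) • ∑ j, (θ.2.1 j • (deriv σ (a j) • A j) + σ (a j) • W2 j) with hU
  have hu : HasFDerivAt (fun p : ℝ × (Fin N1 → ℝ) × (Fin N1 → Fin d → ℝ) =>
      (N1:ℝ)^(-γ1) * ∑ j, p.2.1 j * σ (∑ l, p.2.2 j l * x l)) U θ :=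
    hsum.const_mul _
  set u : ℝ := (N1:ℝ)^(-γ1) * ∑ j, θ.2.1 j * σ (a j) with hudef
  have hg : HasFDerivAt (fun p : ℝ × (Fin N1 → ℝ) × (Fin N1 → Fin d → ℝ) =>
      p.1 * σ ((N1:ℝ)^(-γ1) * ∑ j, p.2.1 j * σ (∑ l, p.2.2 j l * x l)))
      (θ.1 • (deriv σ u • U) + σ u • (ContinuousLinearMap.fst ℝ ℝ ((Fin N1 → ℝ) × (Fin N1 → Fin d → ℝ)))) θ :=
    (ContinuousLinearMap.fst ℝ ℝ _).hasFDerivAt.mul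
      (HasDerivAt.comp_hasFDerivAt θ ((hσd u).hasDerivAt) hu)
  set D : ℝ := (N1:ℝ)^(-γ1) *
    ∑ j, (θ.2.1 j * (deriv σ (a j) * b j) + σ (a j) * Δθ.2.1 j) with hD
  have hval : fderiv ℝ (fun p : ℝ × (Fin N1 → ℝ) × (Fin N1 → Fin d → ℝ) =>
      p.1 * σ ((N1:ℝ)^(-γ1) * ∑ j, p.2.1 j * σ (∑ l, p.2.2 j l * x l))) θ Δθ
      = σ u * Δθ.1 + θ.1 * (deriv σ u * D) := by
    rw [hg.fderiv]
    simp only [hU, hAdef, hW2def, hP3, hP2, hD, hb, ContinuousLinearMap.add_apply,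
      ContinuousLinearMap.smul_apply, ContinuousLinearMap.coe_sum',
      ContinuousLinearMap.sum_apply, ContinuousLinearMap.coe_comp',
      ContinuousLinearMap.comp_apply, ContinuousLinearMap.coe_fst',
      ContinuousLinearMap.coe_snd', ContinuousLinearMap.proj_apply,
      smul_eq_mul, Function.comp_apply,
      show ∀ p : ℝ × (Fin N1 → ℝ) × (Fin N1 → Fin d → ℝ), (ContinuousLinearMap.fst ℝ ℝ ((Fin N1 → ℝ) × (Fin N1 → Fin d → ℝ))) p = p.1 from fun _ => rfl,
      show ∀ p : ℝ × (Fin N1 → ℝ) × (Fin N1 → Fin d → ℝ), (ContinuousLinearMap.snd ℝ ℝ ((Fin N1 → ℝ) × (Fin N1 → Fin d → ℝ))) p = p.2 from fun _ => rfl]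
    rw [Finset.mul_sum]
    ring
  rw [hval]
  -- rewrite g(θ+Δθ) and g(θ) in scalar terms
  have hadd1 : (θ + Δθ).1 = θ.1 + Δθ.1 := rfl
  have hadd2 : ∀ j, (θ + Δθ).2.1 j = θ.2.1 j + Δθ.2.1 j := fun _ => rfl
  have hadd3 : ∀ j l, (θ + Δθ).2.2 j l = θ.2.2 j l + Δθ.2.2 j l := fun _ _ => rfl
  have haj : ∀ j, (∑ l, (θ + Δθ).2.2 j l * x l) = a j + b j := by
    intro j
    rw [ha]
    simp only [hadd3, hb]
    rw [← Finset.sum_add_distrib]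
    exact Finset.sum_congr rfl (fun l _ => by ring)
  set u' : ℝ := (N1:ℝ)^(-γ1) * ∑ j, (θ.2.1 j + Δθ.2.1 j) * σ (a j + b j) with hu'
  have hsum_eq : ∑ j, (θ + Δθ).2.1 j * σ (∑ l, (θ + Δθ).2.2 j l * x l)
      = ∑ j, (θ.2.1 j + Δθ.2.1 j) * σ (a j + b j) :=
    Finset.sum_congr rfl (fun j _ => by rw [hadd2, haj])
  have hgval : (θ + Δθ).1 * σ ((N1:ℝ)^(-γ1) *
      ∑ j, (θ + Δθ).2.1 j * σ (∑ l, (θ + Δθ).2.2 j l * x l)) = (θ.1 + Δθ.1) * σ u' := by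
    rw [hadd1, hsum_eq, hu']
  rw [hgval]
  -- bound on the increment δ = u' - u
  set δ : ℝ := u' - u with hδ
  have hδeq : δ = (N1:ℝ)^(-γ1) *
      ∑ j, ((θ.2.1 j + Δθ.2.1 j) * σ (a j + b j) - θ.2.1 j * σ (a j)) := by
    rw [hδ, hu', hudef, ← mul_sub, Finset.sum_sub_distrib]
  have htj : ∀ j, |(θ.2.1 j + Δθ.2.1 j) * σ (a j + b j) - θ.2.1 j * σ (a j)| ≤ C1 * ε2 := by
    intro j
    have e : (θ.2.1 j + Δθ.2.1 j) * σ (a j + b j) - θ.2.1 j * σ (a j)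
        = Δθ.2.1 j * σ (a j + b j) + θ.2.1 j * (σ (a j + b j) - σ (a j)) := by ring
    rw [e]
    have h1 : |Δθ.2.1 j * σ (a j + b j)| ≤ ε2 * S := by
      rw [abs_mul]; exact mul_le_mul (hΔw2 j) (hσbd _) (abs_nonneg _) hε2
    have hlip : |σ (a j + b j) - σ (a j)| ≤ S * (B * ε2) := by
      calc |σ (a j + b j) - σ (a j)| ≤ S * |a j + b j - a j| := hσlip _ _
        _ = S * |b j| := by rw [add_sub_cancel_left]
        _ ≤ S * (B * ε2) := mul_le_mul_of_nonneg_left (hbj j) hS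
    have h2 : |θ.2.1 j * (σ (a j + b j) - σ (a j))| ≤ K * (S * (B * ε2)) := by
      rw [abs_mul]
      exact mul_le_mul (hw2 j) hlip (abs_nonneg _) hK
    calc |Δθ.2.1 j * σ (a j + b j) + θ.2.1 j * (σ (a j + b j) - σ (a j))|
        ≤ |Δθ.2.1 j * σ (a j + b j)| + |θ.2.1 j * (σ (a j + b j) - σ (a j))| := abs_add_le _ _
      _ ≤ ε2 * S + K * (S * (B * ε2)) := add_le_add h1 h2
      _ = C1 * ε2 := by rw [hC1]; ring
  have hδbd : |δ| ≤ P * (C1 * ε2) := by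
    rw [hδeq, abs_mul, abs_of_nonneg hNgnn]
    calc (N1:ℝ)^(-γ1) * |∑ j, ((θ.2.1 j + Δθ.2.1 j) * σ (a j + b j) - θ.2.1 j * σ (a j))|
        ≤ (N1:ℝ)^(-γ1) * ((N1:ℝ) * (C1 * ε2)) :=
          mul_le_mul_of_nonneg_left (abs_sum_le_card_mul _ _ htj) hNgnn
      _ = P * (C1 * ε2) := by rw [← hP]; ring
  -- bound on δ - D (second order part of u)
  have hsj : ∀ j, |(θ.2.1 j + Δθ.2.1 j) * σ (a j + b j) - θ.2.1 j * σ (a j)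
      - (θ.2.1 j * (deriv σ (a j) * b j) + σ (a j) * Δθ.2.1 j)| ≤ C2 * ε2 ^ 2 := by
    intro j
    have e : (θ.2.1 j + Δθ.2.1 j) * σ (a j + b j) - θ.2.1 j * σ (a j)
        - (θ.2.1 j * (deriv σ (a j) * b j) + σ (a j) * Δθ.2.1 j)
        = Δθ.2.1 j * (σ (a j + b j) - σ (a j))
          + θ.2.1 j * (σ (a j + b j) - σ (a j) - deriv σ (a j) * b j) := by ring
    rw [e]
    have hlip : |σ (a j + b j) - σ (a j)| ≤ S * (B * ε2) := by
      calc |σ (a j + b j) - σ (a j)| ≤ S * |a j + b j - a j| := hσlip _ _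
        _ = S * |b j| := by rw [add_sub_cancel_left]
        _ ≤ S * (B * ε2) := mul_le_mul_of_nonneg_left (hbj j) hS
    have h1 : |Δθ.2.1 j * (σ (a j + b j) - σ (a j))| ≤ ε2 * (S * (B * ε2)) := by
      rw [abs_mul]
      exact mul_le_mul (hΔw2 j) hlip (abs_nonneg _) hε2
    have hbsq : (b j) ^ 2 ≤ (B * ε2) ^ 2 := by
      calc (b j) ^ 2 = |b j| ^ 2 := (sq_abs _).symm
        _ ≤ (B * ε2) ^ 2 := pow_le_pow_left₀ (abs_nonneg _) (hbj j) 2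
    have htay : |σ (a j + b j) - σ (a j) - deriv σ (a j) * b j| ≤ S * (B * ε2) ^ 2 := by
      calc |σ (a j + b j) - σ (a j) - deriv σ (a j) * b j| ≤ S * (b j) ^ 2 := hσtaylor _ _
        _ ≤ S * (B * ε2) ^ 2 := mul_le_mul_of_nonneg_left hbsq hS
    have h2 : |θ.2.1 j * (σ (a j + b j) - σ (a j) - deriv σ (a j) * b j)|
        ≤ K * (S * (B * ε2) ^ 2) := by
      rw [abs_mul]
      exact mul_le_mul (hw2 j) htay (abs_nonneg _) hK
    calc |Δθ.2.1 j * (σ (a j + b j) - σ (a j))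
          + θ.2.1 j * (σ (a j + b j) - σ (a j) - deriv σ (a j) * b j)|
        ≤ _ + _ := abs_add_le _ _
      _ ≤ ε2 * (S * (B * ε2)) + K * (S * (B * ε2) ^ 2) := add_le_add h1 h2
      _ = C2 * ε2 ^ 2 := by rw [hC2]; ring
  have hδD : |δ - D| ≤ P * (C2 * ε2 ^ 2) := by
    have e : δ - D = (N1:ℝ)^(-γ1) *
        ∑ j, ((θ.2.1 j + Δθ.2.1 j) * σ (a j + b j) - θ.2.1 j * σ (a j)
          - (θ.2.1 j * (deriv σ (a j) * b j) + σ (a j) * Δθ.2.1 j)) := by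
      rw [hδeq, hD, ← mul_sub, Finset.sum_sub_distrib,
        ← Finset.sum_sub_distrib, ← Finset.sum_sub_distrib]
    rw [e, abs_mul, abs_of_nonneg hNgnn]
    calc (N1:ℝ)^(-γ1) * |∑ j, _| ≤ (N1:ℝ)^(-γ1) * ((N1:ℝ) * (C2 * ε2 ^ 2)) :=
          mul_le_mul_of_nonneg_left (abs_sum_le_card_mul _ _ hsj) hNgnn
      _ = P * (C2 * ε2 ^ 2) := by rw [← hP]; ring
  -- decompose the remainder
  have key : (θ.1 + Δθ.1) * σ u' - θ.1 * σ u - (σ u * Δθ.1 + θ.1 * (deriv σ u * D))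
      = Δθ.1 * (σ u' - σ u) + θ.1 * (σ u' - σ u - deriv σ u * δ)
        + θ.1 * (deriv σ u * (δ - D)) := by ring
  rw [key]
  have hT1 : |Δθ.1 * (σ u' - σ u)| ≤ ε1 * (S * (P * (C1 * ε2))) := by
    rw [abs_mul]
    have hlip : |σ u' - σ u| ≤ S * (P * (C1 * ε2)) := by
      calc |σ u' - σ u| ≤ S * |u' - u| := hσlip _ _
        _ ≤ S * (P * (C1 * ε2)) := by
            have h := hδbd; rw [hδ] at h
            exact mul_le_mul_of_nonneg_left h hS
    exact mul_le_mul hΔc hlip (abs_nonneg _) hε1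
  have hT2 : |θ.1 * (σ u' - σ u - deriv σ u * δ)| ≤ K * (S * (P * (C1 * ε2)) ^ 2) := by
    rw [abs_mul]
    have hu'eq : u' = u + δ := by rw [hδ]; ring
    have htay : |σ u' - σ u - deriv σ u * δ| ≤ S * (P * (C1 * ε2)) ^ 2 := by
      have := hσtaylor u δ
      rw [← hu'eq] at this
      have hδsq : δ ^ 2 ≤ (P * (C1 * ε2)) ^ 2 := by
        calc δ ^ 2 = |δ| ^ 2 := (sq_abs _).symm
          _ ≤ (P * (C1 * ε2)) ^ 2 := pow_le_pow_left₀ (abs_nonneg _) hδbd 2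
      calc |σ u' - σ u - deriv σ u * δ| ≤ S * δ ^ 2 := this
        _ ≤ S * (P * (C1 * ε2)) ^ 2 := mul_le_mul_of_nonneg_left hδsq hS
    exact mul_le_mul hc htay (abs_nonneg _) hK
  have hT3 : |θ.1 * (deriv σ u * (δ - D))| ≤ K * (S * (P * (C2 * ε2 ^ 2))) := by
    rw [abs_mul, abs_mul]
    have h1 : |deriv σ u| * |δ - D| ≤ S * (P * (C2 * ε2 ^ 2)) :=
      mul_le_mul (hσ'bd u) hδD (abs_nonneg _) hS
    exact mul_le_mul hc h1 (by positivity) hK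
  refine le_trans ((abs_add_le _ _).trans (add_le_add
    ((abs_add_le _ _).trans (add_le_add hT1 hT2)) hT3)) ?_
  -- final arithmetic
  have h1 : ε1 * (S * (P * (C1 * ε2))) = (S * C1) * (ε1 * P * ε2) := by ring
  have h2 : K * (S * (P * (C1 * ε2)) ^ 2) = (K * S * C1 ^ 2) * (Q * ε2 ^ 2) := by
    rw [← hPsq]; ring
  have h3 : K * (S * (P * (C2 * ε2 ^ 2))) ≤ (K * S * C2) * (Q * ε2 ^ 2) := by
    have hPQ : P * ε2 ^ 2 ≤ Q * ε2 ^ 2 := mul_le_mul_of_nonneg_right hPle (sq_nonneg _)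
    calc K * (S * (P * (C2 * ε2 ^ 2))) = (K * S * C2) * (P * ε2 ^ 2) := by ring
      _ ≤ (K * S * C2) * (Q * ε2 ^ 2) :=
          mul_le_mul_of_nonneg_left hPQ (mul_nonneg (mul_nonneg hK hS) hC2nn)
  rw [h1, h2]
  have hbase1 : 0 ≤ ε1 * P * ε2 := mul_nonneg (mul_nonneg hε1 hPpos.le) hε2
  have hbase2 : 0 ≤ Q * ε2 ^ 2 := mul_nonneg hQpos.le (sq_nonneg _)
  have expand : (S * C1 + K * S * C1 ^ 2 + K * S * C2) * (ε1 * P * ε2 + Q * ε2 ^ 2)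
      = ((S * C1) * (ε1 * P * ε2) + (K * S * C1 ^ 2) * (Q * ε2 ^ 2) + (K * S * C2) * (Q * ε2 ^ 2))
        + ((S * C1) * (Q * ε2 ^ 2) + (K * S * C1 ^ 2) * (ε1 * P * ε2)
          + (K * S * C2) * (ε1 * P * ε2)) := by ring
  have hn1 : 0 ≤ (S * C1) * (Q * ε2 ^ 2) := mul_nonneg (mul_nonneg hS hC1nn) hbase2
  have hn2 : 0 ≤ (K * S * C1 ^ 2) * (ε1 * P * ε2) :=
    mul_nonneg (mul_nonneg (mul_nonneg hK hS) (sq_nonneg C1)) hbase1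
  have hn3 : 0 ≤ (K * S * C2) * (ε1 * P * ε2) :=
    mul_nonneg (mul_nonneg (mul_nonneg hK hS) hC2nn) hbase1
  linarith [h3]
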